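/- Let u, v ∈ P with q(u) = q(v) = 1, ⟨u,v⟩ = 0 and u ∈ N. Then the orthogonal projection π_B restricted to R(u,v) is a linear isomorphism from R(u,v) onto B; in particular R(u,v) is 2-dimensional. -/

import Mathlib

noncomputable section

open Quaternion

/-- The split octonions `𝕆' = ℍ × ℍ`. -/
abbrev SplitOct : Type := ℍ[ℝ] × ℍ[ℝ]

namespace SplitOct

/-- Split octonion multiplication `(a,b)(c,d) = (ac + d̄b, da + bc̄)`. -/
def mul (x y : SplitOct) : SplitOct :=
  (x.1 * y.1 + star y.2 * x.2, y.2 * x.1 + x.2 * star y.1)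

/-- Split octonion conjugation `(a,b)* = (ā, −b)`. -/
def conj (x : SplitOct) : SplitOct := (star x.1, -x.2)

lemma conj_add (x y : SplitOct) : conj (x + y) = conj x + conj y := by
  simp only [conj, Prod.fst_add, Prod.snd_add, star_add, Prod.mk_add_mk, neg_add]

lemma conj_neg (x : SplitOct) : conj (-x) = -conj x := by
  simp [conj, Prod.ext_iff]

lemma conj_sub (x y : SplitOct) : conj (x - y) = conj x - conj y := by
  rw [sub_eq_add_neg, conj_add, conj_neg, ← sub_eq_add_neg]

lemma conj_smul (r : ℝ) (x : SplitOct) : conj (r • x) = r • conj x := by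
  simp [conj, Prod.ext_iff]

lemma conj_conj (x : SplitOct) : conj (conj x) = x := by
  simp [conj]

lemma conj_zero : conj 0 = 0 := by
  simp [conj, Prod.ext_iff]

/-- The imaginary split octonions `Im 𝕆' = {x | x* = −x}`. -/
def Im : Submodule ℝ SplitOct where
  carrier := {x | conj x = -x}
  add_mem' := by
    intro a b ha hb
    simp only [Set.mem_setOf_eq] at ha hb ⊢
    rw [conj_add, ha, hb, neg_add]
  zero_mem' := by
    simp only [Set.mem_setOf_eq, conj_zero, neg_zero]
  smul_mem' := by
    intro r a ha
    simp only [Set.mem_setOf_eq] at ha ⊢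
    rw [conj_smul, ha, smul_neg]

lemma mem_Im_iff {x : SplitOct} : x ∈ Im ↔ conj x = -x := Iff.rfl

/-- `q x = x·x*`, read as a real number (its values lie in `ℝ·1 ≅ ℝ`). -/
def q (x : SplitOct) : ℝ := (mul x (conj x)).1.re

/-- The polarization `⟨x,y⟩` of the quadratic form `q`. -/
def polar (x y : SplitOct) : ℝ := (q (x + y) - q x - q y) / 2

/-- The cross product `x × y = (xy − (xy)*)/2`. -/
def cross (x y : SplitOct) : SplitOct := (2 : ℝ)⁻¹ • (mul x y - conj (mul x y))

/-- The scalar triple product `Ω(u,v,w) = ⟨u×v, w⟩`. -/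
def triple (u v w : SplitOct) : ℝ := polar (cross u v) w

lemma q_apply (x : SplitOct) : q x = normSq x.1 - normSq x.2 := by
  simp only [q, mul, conj, star_neg, neg_mul, Quaternion.self_mul_star, Quaternion.star_mul_self,
    Quaternion.re_add, Quaternion.re_neg, Quaternion.re_coe]
  ring

lemma polar_apply (x y : SplitOct) :
    polar x y = (x.1 * star y.1).re - (x.2 * star y.2).re := by
  simp only [polar, q_apply, Prod.fst_add, Prod.snd_add, Quaternion.normSq_def',
    Quaternion.re_mul, Quaternion.re_add, Quaternion.imI_add, Quaternion.imJ_add,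
    Quaternion.imK_add, Quaternion.re_star, Quaternion.imI_star, Quaternion.imJ_star,
    Quaternion.imK_star]
  ring

lemma polar_add_left (x x' y : SplitOct) : polar (x + x') y = polar x y + polar x' y := by
  simp only [polar_apply, Prod.fst_add, Prod.snd_add, add_mul, Quaternion.re_add]
  ring

lemma polar_add_right (x y y' : SplitOct) : polar x (y + y') = polar x y + polar x y' := by
  simp only [polar_apply, Prod.fst_add, Prod.snd_add, star_add, mul_add, Quaternion.re_add]
  ring

lemma polar_smul_left (r : ℝ) (x y : SplitOct) : polar (r • x) y = r * polar x y := by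
  simp only [polar_apply, Prod.smul_fst, Prod.smul_snd, smul_mul_assoc, Quaternion.re_smul,
    smul_eq_mul]
  ring

lemma polar_smul_right (r : ℝ) (x y : SplitOct) : polar x (r • y) = r * polar x y := by
  simp only [polar_apply, Prod.smul_fst, Prod.smul_snd, Quaternion.star_smul,
    mul_smul_comm, Quaternion.re_smul, smul_eq_mul]
  ring

lemma polar_zero_left (y : SplitOct) : polar 0 y = 0 := by
  simp [polar_apply]

lemma polar_zero_right (x : SplitOct) : polar x 0 = 0 := by
  simp [polar_apply]

lemma mul_add_left (x x' y : SplitOct) : mul (x + x') y = mul x y + mul x' y := by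
  simp only [mul, Prod.fst_add, Prod.snd_add, add_mul, mul_add, Prod.mk_add_mk, Prod.mk.injEq]
  constructor <;> abel

lemma mul_add_right (x y y' : SplitOct) : mul x (y + y') = mul x y + mul x y' := by
  simp only [mul, Prod.fst_add, Prod.snd_add, star_add, add_mul, mul_add, Prod.mk_add_mk,
    Prod.mk.injEq]
  constructor <;> abel

lemma mul_smul_left (r : ℝ) (x y : SplitOct) : mul (r • x) y = r • mul x y := by
  simp only [mul, Prod.smul_fst, Prod.smul_snd, smul_mul_assoc, mul_smul_comm, Prod.smul_mk,
    smul_add]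

lemma mul_smul_right (r : ℝ) (x y : SplitOct) : mul x (r • y) = r • mul x y := by
  simp only [mul, Prod.smul_fst, Prod.smul_snd, Quaternion.star_smul, smul_mul_assoc,
    mul_smul_comm, Prod.smul_mk, smul_add]

lemma mul_zero_left (y : SplitOct) : mul 0 y = 0 := by
  simp [mul, Prod.ext_iff]

lemma mul_zero_right (x : SplitOct) : mul x 0 = 0 := by
  simp [mul, Prod.ext_iff]

lemma cross_add_left (x x' y : SplitOct) : cross (x + x') y = cross x y + cross x' y := by
  rw [cross, cross, cross, mul_add_left, conj_add]
  module

lemma cross_add_right (x y y' : SplitOct) : cross x (y + y') = cross x y + cross x y' := by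
  rw [cross, cross, cross, mul_add_right, conj_add]
  module

lemma cross_smul_left (r : ℝ) (x y : SplitOct) : cross (r • x) y = r • cross x y := by
  rw [cross, cross, mul_smul_left, conj_smul]
  module

lemma cross_smul_right (r : ℝ) (x y : SplitOct) : cross x (r • y) = r • cross x y := by
  rw [cross, cross, mul_smul_right, conj_smul]
  module

lemma cross_zero_left (y : SplitOct) : cross 0 y = 0 := by
  simp [cross, mul_zero_left, conj_zero]

lemma cross_zero_right (x : SplitOct) : cross x 0 = 0 := by
  simp [cross, mul_zero_right, conj_zero]

lemma cross_mem_Im (x y : SplitOct) : cross x y ∈ Im := by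
  rw [mem_Im_iff, cross, conj_smul, conj_sub, conj_conj]
  module

lemma triple_add₁ (u u' v w : SplitOct) :
    triple (u + u') v w = triple u v w + triple u' v w := by
  rw [triple, triple, triple, cross_add_left, polar_add_left]

lemma triple_add₂ (u v v' w : SplitOct) :
    triple u (v + v') w = triple u v w + triple u v' w := by
  rw [triple, triple, triple, cross_add_right, polar_add_left]

lemma triple_add₃ (u v w w' : SplitOct) :
    triple u v (w + w') = triple u v w + triple u v w' :=
  polar_add_right _ _ _

lemma triple_smul₁ (r : ℝ) (u v w : SplitOct) : triple (r • u) v w = r * triple u v w := by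
  rw [triple, triple, cross_smul_left, polar_smul_left]

lemma triple_smul₂ (r : ℝ) (u v w : SplitOct) : triple u (r • v) w = r * triple u v w := by
  rw [triple, triple, cross_smul_right, polar_smul_left]

lemma triple_smul₃ (r : ℝ) (u v w : SplitOct) : triple u v (r • w) = r * triple u v w :=
  polar_smul_right _ _ _

lemma triple_zero₁ (v w : SplitOct) : triple 0 v w = 0 := by
  rw [triple, cross_zero_left, polar_zero_left]

lemma triple_zero₂ (u w : SplitOct) : triple u 0 w = 0 := by
  rw [triple, cross_zero_right, polar_zero_left]

lemma triple_zero₃ (u v : SplitOct) : triple u v 0 = 0 :=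
  polar_zero_right _

/-- The orthogonal complement of `P` inside the imaginary split octonions. -/
def orth (P : Submodule ℝ SplitOct) : Submodule ℝ SplitOct where
  carrier := {x | x ∈ Im ∧ ∀ y ∈ P, polar x y = 0}
  add_mem' := by
    rintro a b ⟨ha1, ha2⟩ ⟨hb1, hb2⟩
    exact ⟨Im.add_mem ha1 hb1, fun y hy => by
      rw [polar_add_left, ha2 y hy, hb2 y hy, add_zero]⟩
  zero_mem' := ⟨Im.zero_mem, fun y _ => polar_zero_left y⟩
  smul_mem' := by
    rintro r a ⟨ha1, ha2⟩
    exact ⟨Im.smul_mem r ha1, fun y hy => by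
      rw [polar_smul_left, ha2 y hy, mul_zero]⟩

/-- The annihilator `Ann x = {v ∈ Im 𝕆' | x × v = 0}`. -/
def Ann (x : SplitOct) : Submodule ℝ SplitOct where
  carrier := {v | v ∈ Im ∧ cross x v = 0}
  add_mem' := by
    rintro a b ⟨ha1, ha2⟩ ⟨hb1, hb2⟩
    exact ⟨Im.add_mem ha1 hb1, by rw [cross_add_right, ha2, hb2, add_zero]⟩
  zero_mem' := ⟨Im.zero_mem, cross_zero_right x⟩
  smul_mem' := by
    rintro r a ⟨ha1, ha2⟩
    exact ⟨Im.smul_mem r ha1, by rw [cross_smul_right, ha2, smul_zero]⟩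

/-- An isotropic line of `Im 𝕆'`. -/
def IsIsotropicLine (ℓ : Submodule ℝ SplitOct) : Prop :=
  ∃ x, x ∈ Im ∧ x ≠ 0 ∧ q x = 0 ∧ ℓ = Submodule.span ℝ {x}

/-- An annihilator photon: a 2-dimensional totally isotropic subspace of `Im 𝕆'`
on which the cross product vanishes identically. -/
def IsAnnihilatorPhoton (ω : Submodule ℝ SplitOct) : Prop :=
  ω ≤ Im ∧ Module.finrank ℝ ω = 2 ∧ (∀ x ∈ ω, q x = 0) ∧
    ∀ x ∈ ω, ∀ y ∈ ω, cross x y = 0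


/-- The imaginary unit `𝐢 = (i, 0)`. -/
def oi : SplitOct := ((⟨0, 1, 0, 0⟩ : ℍ[ℝ]), 0)

/-- The imaginary unit `𝐣 = (j, 0)`. -/
def oj : SplitOct := ((⟨0, 0, 1, 0⟩ : ℍ[ℝ]), 0)

/-- The imaginary unit `𝐤 = (k, 0)`. -/
def ok : SplitOct := ((⟨0, 0, 0, 1⟩ : ℍ[ℝ]), 0)

/-- The split unit `𝐥 = (0, 1)`. -/
def ol : SplitOct := (0, 1)

/-- `𝐥𝐢 = 𝐥·𝐢`. -/
def oli : SplitOct := mul ol oi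

/-- `𝐥𝐣 = 𝐥·𝐣`. -/
def olj : SplitOct := mul ol oj

/-- `𝐥𝐤 = 𝐥·𝐤`. -/
def olk : SplitOct := mul ol ok

/-- `L = ℝ𝐢`. -/
def Lline : Submodule ℝ SplitOct := Submodule.span ℝ {oi}

/-- `T = span{𝐥, 𝐥𝐢}`. -/
def Tplane : Submodule ℝ SplitOct := Submodule.span ℝ {ol, oli}

/-- `N = span{𝐣, 𝐤}`. -/
def Nplane : Submodule ℝ SplitOct := Submodule.span ℝ {oj, ok}

/-- `B = span{𝐥𝐣, 𝐥𝐤}`. -/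
def Bplane : Submodule ℝ SplitOct := Submodule.span ℝ {olj, olk}

/-- `P = L ⊕ N = span{𝐢, 𝐣, 𝐤}`. -/
def Pplane : Submodule ℝ SplitOct := Submodule.span ℝ {oi, oj, ok}

lemma oi_mem_P : oi ∈ Pplane := Submodule.subset_span (by simp)

lemma N_le_P : Nplane ≤ Pplane := by
  refine Submodule.span_le.mpr ?_
  rintro x hx
  simp only [Set.mem_insert_iff, Set.mem_singleton_iff] at hx
  rcases hx with rfl | rfl
  · exact Submodule.subset_span (by simp)
  · exact Submodule.subset_span (by simp)

/-- The pencil `𝒫₀` of linear maps `φ : P → Im 𝕆'` with `φ 𝐢 = 0`, `φ N ⊆ T`, and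
`φ (𝐢×n) = 𝐢×(φ n)` for all `n ∈ N`. -/
def Pzero : Set (Pplane →ₗ[ℝ] SplitOct) :=
  {φ | (∀ x, φ x ∈ Im) ∧
    φ ⟨oi, oi_mem_P⟩ = 0 ∧
    (∀ n, ∀ hn : n ∈ Nplane, φ ⟨n, N_le_P hn⟩ ∈ Tplane) ∧
    ∀ n, ∀ hn : n ∈ Nplane, ∀ hmem : cross oi n ∈ Pplane,
      φ ⟨cross oi n, hmem⟩ = cross oi (φ ⟨n, N_le_P hn⟩)}

/-- The subspace `R(u,v) = {z ∈ P⊥ : ⟨φ u, z⟩ + ⟨φ v, (uv)z⟩ = 0 for all φ ∈ 𝒫₀}`. -/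
def Rsub (u v : SplitOct) (hu : u ∈ Pplane) (hv : v ∈ Pplane) : Submodule ℝ SplitOct where
  carrier := {z | z ∈ orth Pplane ∧
    ∀ φ ∈ Pzero, polar (φ ⟨u, hu⟩) z + polar (φ ⟨v, hv⟩) (mul (mul u v) z) = 0}
  add_mem' := by
    rintro a b ⟨ha1, ha2⟩ ⟨hb1, hb2⟩
    refine ⟨(orth Pplane).add_mem ha1 hb1, fun φ hφ => ?_⟩
    rw [mul_add_right, polar_add_right, polar_add_right]
    have h1 := ha2 φ hφ
    have h2 := hb2 φ hφ
    linarith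
  zero_mem' := by
    refine ⟨(orth Pplane).zero_mem, fun φ hφ => ?_⟩
    rw [mul_zero_right, polar_zero_right, polar_zero_right, add_zero]
  smul_mem' := by
    rintro r a ⟨ha1, ha2⟩
    refine ⟨(orth Pplane).smul_mem r ha1, fun φ hφ => ?_⟩
    rw [mul_smul_right, polar_smul_right, polar_smul_right, ← mul_add, ha2 φ hφ, mul_zero]


/-! ### Auxiliary lemmas -/

/-- A quaternion literal typed as `ℍ[ℝ]`. -/
def qmk (a b c d : ℝ) : ℍ[ℝ] := ⟨a, b, c, d⟩

@[simp] lemma mk_eq_qmk (a b c d : ℝ) : (⟨a, b, c, d⟩ : ℍ[ℝ]) = qmk a b c d := rfl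
@[simp] lemma qmk_re (a b c d : ℝ) : (qmk a b c d).re = a := rfl
@[simp] lemma qmk_imI (a b c d : ℝ) : (qmk a b c d).imI = b := rfl
@[simp] lemma qmk_imJ (a b c d : ℝ) : (qmk a b c d).imJ = c := rfl
@[simp] lemma qmk_imK (a b c d : ℝ) : (qmk a b c d).imK = d := rfl
@[simp] lemma star_qmk (a b c d : ℝ) : star (qmk a b c d) = qmk a (-b) (-c) (-d) := by
  ext <;> simp only [Quaternion.re_star, Quaternion.imI_star, Quaternion.imJ_star,
    Quaternion.imK_star, qmk_re, qmk_imI, qmk_imJ, qmk_imK]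
@[simp] lemma smul_qmk (r a b c d : ℝ) : r • qmk a b c d = qmk (r*a) (r*b) (r*c) (r*d) := by
  ext <;> simp only [Quaternion.re_smul, Quaternion.imI_smul, Quaternion.imJ_smul,
    Quaternion.imK_smul, qmk_re, qmk_imI, qmk_imJ, qmk_imK, smul_eq_mul]
@[simp] lemma pair_fix1 (x y : ℍ[ℝ]) :
    (@Prod.mk (QuaternionAlgebra ℝ (-1) 0 (-1)) ℍ[ℝ] x y : SplitOct) = @Prod.mk ℍ[ℝ] ℍ[ℝ] x y := rfl
@[simp] lemma pair_fix2 (x y : ℍ[ℝ]) :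
    (@Prod.mk ℍ[ℝ] (QuaternionAlgebra ℝ (-1) 0 (-1)) x y : SplitOct) = @Prod.mk ℍ[ℝ] ℍ[ℝ] x y := rfl

lemma oli_eq : oli = (0, (⟨0,-1,0,0⟩ : ℍ[ℝ])) := by
  simp [oli, mul, ol, oi, Quaternion.ext_iff]

lemma olj_eq : olj = (0, (⟨0,0,-1,0⟩ : ℍ[ℝ])) := by
  simp [olj, mul, ol, oj, Quaternion.ext_iff]

lemma olk_eq : olk = (0, (⟨0,0,0,-1⟩ : ℍ[ℝ])) := by
  simp [olk, mul, ol, ok, Quaternion.ext_iff]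

lemma mem_P_iff {x : SplitOct} : x ∈ Pplane ↔ x.2 = 0 ∧ x.1.re = 0 := by
  constructor
  · intro h
    rw [Pplane, Submodule.mem_span_insert] at h
    obtain ⟨r, y, hy, rfl⟩ := h
    rw [Submodule.mem_span_pair] at hy
    obtain ⟨m, n, rfl⟩ := hy
    simp [oi, oj, ok, Quaternion.ext_iff]
  · rintro ⟨h2, h1⟩
    have hx : x = x.1.imI • oi + (x.1.imJ • oj + x.1.imK • ok) := by
      simp [Prod.ext_iff, Quaternion.ext_iff, oi, oj, ok, h1, h2]
    rw [hx, Pplane]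
    exact Submodule.add_mem _
      (Submodule.smul_mem _ _ (Submodule.subset_span (by simp)))
      (Submodule.add_mem _
        (Submodule.smul_mem _ _ (Submodule.subset_span (by simp)))
        (Submodule.smul_mem _ _ (Submodule.subset_span (by simp))))

lemma mem_N_iff {x : SplitOct} : x ∈ Nplane ↔ x.2 = 0 ∧ x.1.re = 0 ∧ x.1.imI = 0 := by
  constructor
  · intro h
    rw [Nplane, Submodule.mem_span_pair] at h
    obtain ⟨m, n, rfl⟩ := h
    simp [oj, ok, Quaternion.ext_iff]
  · rintro ⟨h2, h1, hI⟩
    rw [Nplane, Submodule.mem_span_pair]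
    exact ⟨x.1.imJ, x.1.imK, by simp [Prod.ext_iff, Quaternion.ext_iff, oj, ok, h1, h2, hI]⟩

lemma mem_T_iff {x : SplitOct} : x ∈ Tplane ↔ x.1 = 0 ∧ x.2.imJ = 0 ∧ x.2.imK = 0 := by
  constructor
  · intro h
    rw [Tplane, Submodule.mem_span_pair] at h
    obtain ⟨m, n, rfl⟩ := h
    simp [ol, oli_eq, Quaternion.ext_iff]
  · rintro ⟨h1, hJ, hK⟩
    rw [Tplane, Submodule.mem_span_pair]
    exact ⟨x.2.re, -x.2.imI, by simp [Prod.ext_iff, Quaternion.ext_iff, ol, oli_eq, h1, hJ, hK]⟩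

lemma mem_B_iff {x : SplitOct} : x ∈ Bplane ↔ x.1 = 0 ∧ x.2.re = 0 ∧ x.2.imI = 0 := by
  constructor
  · intro h
    rw [Bplane, Submodule.mem_span_pair] at h
    obtain ⟨m, n, rfl⟩ := h
    simp [olj_eq, olk_eq, Quaternion.ext_iff]
  · rintro ⟨h1, hr, hI⟩
    rw [Bplane, Submodule.mem_span_pair]
    refine ⟨-x.2.imJ, -x.2.imK, ?_⟩
    simp [Prod.ext_iff, Quaternion.ext_iff, olj_eq, olk_eq, h1, hr, hI]

lemma mem_Im_iff' {x : SplitOct} : x ∈ Im ↔ x.1.re = 0 := by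
  rw [mem_Im_iff, conj, Prod.ext_iff]
  constructor
  · rintro ⟨h, -⟩
    have := congrArg QuaternionAlgebra.re h
    simp at this
    linarith
  · intro h
    refine ⟨?_, rfl⟩
    apply Quaternion.ext <;> simp [h]

lemma oj_mem_P : oj ∈ Pplane := Submodule.subset_span (by simp)
lemma ok_mem_P : ok ∈ Pplane := Submodule.subset_span (by simp)

lemma mem_orthP_iff {z : SplitOct} : z ∈ orth Pplane ↔ z.1 = 0 := by
  constructor
  · rintro ⟨h1, h2⟩
    have hre : z.1.re = 0 := mem_Im_iff'.mp h1
    have hi := h2 oi oi_mem_P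
    have hj := h2 oj oj_mem_P
    have hk := h2 ok ok_mem_P
    simp [polar_apply, oi, oj, ok, Quaternion.re_mul, Quaternion.re_star,
      Quaternion.imI_star, Quaternion.imJ_star, Quaternion.imK_star] at hi hj hk
    apply Quaternion.ext <;> simp [hre] <;> linarith
  · intro h
    refine ⟨mem_Im_iff'.mpr (by simp [h]), fun y hy => ?_⟩
    rw [mem_P_iff] at hy
    simp [polar_apply, h, hy.1]

lemma mem_orthB_iff {x : SplitOct} :
    x ∈ orth Bplane ↔ x.1.re = 0 ∧ x.2.imJ = 0 ∧ x.2.imK = 0 := by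
  constructor
  · rintro ⟨h1, h2⟩
    have hre : x.1.re = 0 := mem_Im_iff'.mp h1
    have hj := h2 olj (Submodule.subset_span (by simp [Bplane]))
    have hk := h2 olk (Submodule.subset_span (by simp [Bplane]))
    simp [polar_apply, olj_eq, olk_eq, Quaternion.re_mul, Quaternion.re_star,
      Quaternion.imI_star, Quaternion.imJ_star, Quaternion.imK_star] at hj hk
    exact ⟨hre, hj, hk⟩
  · rintro ⟨hre, hJ, hK⟩
    refine ⟨mem_Im_iff'.mpr hre, fun y hy => ?_⟩
    rw [mem_B_iff] at hy
    obtain ⟨h1, h2, h3⟩ := hy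
    simp [polar_apply, h1, Quaternion.re_mul, Quaternion.re_star,
      Quaternion.imI_star, Quaternion.imJ_star, Quaternion.imK_star, h2, h3, hJ, hK]

lemma oj_mem_N : oj ∈ Nplane := Submodule.subset_span (by simp)
lemma ok_mem_N : ok ∈ Nplane := Submodule.subset_span (by simp)

lemma cross_oi_oj : cross oi oj = ok := by
  simp [cross, mul, conj, oi, oj, ok, Prod.ext_iff, Quaternion.ext_iff]
  norm_num [Quaternion.ext_iff]

/-- decomposition of any `φ ∈ 𝒫₀` on the basis `oj, ok` of `N`. -/
lemma Pzero_decomp {φ : Pplane →ₗ[ℝ] SplitOct} (hφ : φ ∈ Pzero) :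
    ∃ α β : ℝ, φ ⟨oj, oj_mem_P⟩ = (0, (⟨α, -β, 0, 0⟩ : ℍ[ℝ])) ∧
      φ ⟨ok, ok_mem_P⟩ = (0, (⟨β, α, 0, 0⟩ : ℍ[ℝ])) := by
  obtain ⟨hIm, hi, hT, hcr⟩ := hφ
  have hj := hT oj oj_mem_N
  rw [mem_T_iff] at hj
  set y := φ ⟨oj, N_le_P oj_mem_N⟩ with hy
  refine ⟨y.2.re, -y.2.imI, ?_, ?_⟩
  · refine Prod.ext hj.1 ?_
    apply Quaternion.ext <;> simp [hj.2.1, hj.2.2]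
  · have hmem : cross oi oj ∈ Pplane := by rw [cross_oi_oj]; exact ok_mem_P
    have h2 := hcr oj oj_mem_N hmem
    have h3 : φ ⟨cross oi oj, hmem⟩ = φ ⟨ok, ok_mem_P⟩ :=
      congrArg φ (Subtype.ext cross_oi_oj)
    rw [h3] at h2
    rw [h2]
    have hy2 : y = (0, (⟨y.2.re, y.2.imI, 0, 0⟩ : ℍ[ℝ])) := by
      refine Prod.ext hj.1 ?_
      apply Quaternion.ext <;> simp [hj.2.1, hj.2.2]
    rw [← hy, hy2]
    simp [cross, mul, conj, oi, Prod.ext_iff, Quaternion.ext_iff]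
    norm_num [Quaternion.ext_iff]
    constructor <;> ring

/-- The linear map `P → 𝕆'` sending `x ↦ imJ(x)•t1 + imK(x)•t2`. -/
def phiMap (t1 t2 : SplitOct) : Pplane →ₗ[ℝ] SplitOct where
  toFun x := x.val.1.imJ • t1 + x.val.1.imK • t2
  map_add' x y := by
    simp only [Submodule.coe_add, Prod.fst_add, Quaternion.imJ_add, Quaternion.imK_add,
      add_smul]
    module
  map_smul' r x := by
    simp only [SetLike.val_smul, Prod.smul_fst, Quaternion.imJ_smul, Quaternion.imK_smul,
      smul_eq_mul, RingHom.id_apply, mul_smul, smul_add]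

lemma phiMap_mem (t1 t2 : SplitOct) (ht1 : t1 ∈ Tplane) (ht2 : t2 ∈ Tplane)
    (h1 : cross oi t1 = t2) (h2 : cross oi t2 = -t1) : phiMap t1 t2 ∈ Pzero := by
  have hT_le_Im : ∀ x ∈ Tplane, x ∈ Im := fun x hx =>
    mem_Im_iff'.mpr (by rw [(mem_T_iff.mp hx).1]; simp)
  refine ⟨?_, ?_, ?_, ?_⟩
  · intro x
    exact Im.add_mem (Im.smul_mem _ (hT_le_Im _ ht1)) (Im.smul_mem _ (hT_le_Im _ ht2))
  · show (oi.1.imJ) • t1 + (oi.1.imK) • t2 = 0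
    simp [oi]
  · intro n hn
    exact Tplane.add_mem (Tplane.smul_mem _ ht1) (Tplane.smul_mem _ ht2)
  · intro n hn hmem
    obtain ⟨hn2, hnr, hnI⟩ := mem_N_iff.mp hn
    show ((cross oi n).1.imJ) • t1 + ((cross oi n).1.imK) • t2
      = cross oi ((n.1.imJ) • t1 + (n.1.imK) • t2)
    have hJ : (cross oi n).1.imJ = -n.1.imK := by
      simp [cross, mul, conj, oi, hn2, hnr, hnI, Quaternion.imJ_mul]
      ring_nf
    have hK : (cross oi n).1.imK = n.1.imJ := by
      simp [cross, mul, conj, oi, hn2, hnr, hnI, Quaternion.imK_mul]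
      ring_nf
    rw [hJ, hK, cross_add_right, cross_smul_right, cross_smul_right, h1, h2]
    module

/-- `φ₁`: sends `oj ↦ 𝐥`, `ok ↦ (0,i)`. -/
def phi1 : Pplane →ₗ[ℝ] SplitOct := phiMap ol (0, (⟨0,1,0,0⟩ : ℍ[ℝ]))

/-- `φ₂`: sends `oj ↦ (0,-i)`, `ok ↦ 𝐥`. -/
def phi2 : Pplane →ₗ[ℝ] SplitOct := phiMap (0, (⟨0,-1,0,0⟩ : ℍ[ℝ])) ol

lemma ol_mem_T : ol ∈ Tplane := Submodule.subset_span (by simp)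

lemma mem_T_mk (w : ℍ[ℝ]) (hJ : w.imJ = 0) (hK : w.imK = 0) : ((0, w) : SplitOct) ∈ Tplane :=
  mem_T_iff.mpr ⟨rfl, hJ, hK⟩

lemma phi1_mem : phi1 ∈ Pzero := by
  apply phiMap_mem
  · exact ol_mem_T
  · exact mem_T_mk _ rfl rfl
  · simp [cross, mul, conj, oi, ol, Prod.ext_iff, Quaternion.ext_iff]
    try norm_num
  · simp [cross, mul, conj, oi, ol, Prod.ext_iff, Quaternion.ext_iff]
    try norm_num

lemma phi2_mem : phi2 ∈ Pzero := by
  apply phiMap_mem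
  · exact mem_T_mk _ rfl rfl
  · exact ol_mem_T
  · simp [cross, mul, conj, oi, ol, Prod.ext_iff, Quaternion.ext_iff]
    try norm_num
  · simp [cross, mul, conj, oi, ol, Prod.ext_iff, Quaternion.ext_iff]
    try norm_num

lemma phi1_j : phi1 ⟨oj, oj_mem_P⟩ = (0, (⟨(1:ℝ), -(0:ℝ), 0, 0⟩ : ℍ[ℝ])) := by
  show (oj.1.imJ) • ol + (oj.1.imK) • (0, qmk 0 1 0 0) = _
  simp [oj, ol, Prod.ext_iff, Quaternion.ext_iff]

lemma phi1_k : phi1 ⟨ok, ok_mem_P⟩ = (0, (⟨(0:ℝ), (1:ℝ), 0, 0⟩ : ℍ[ℝ])) := by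
  show (ok.1.imJ) • ol + (ok.1.imK) • (0, qmk 0 1 0 0) = _
  simp [ok, ol, Prod.ext_iff, Quaternion.ext_iff]

lemma phi1_i : phi1 ⟨oi, oi_mem_P⟩ = 0 := by
  show (oi.1.imJ) • ol + (oi.1.imK) • (0, qmk 0 1 0 0) = 0
  simp [oi]

lemma phi2_j : phi2 ⟨oj, oj_mem_P⟩ = (0, (⟨(0:ℝ), -(1:ℝ), 0, 0⟩ : ℍ[ℝ])) := by
  show (oj.1.imJ) • (0, qmk 0 (-1) 0 0) + (oj.1.imK) • ol = _
  simp [oj, ol, Prod.ext_iff, Quaternion.ext_iff]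

lemma phi2_k : phi2 ⟨ok, ok_mem_P⟩ = (0, (⟨(1:ℝ), (0:ℝ), 0, 0⟩ : ℍ[ℝ])) := by
  show (ok.1.imJ) • (0, qmk 0 (-1) 0 0) + (ok.1.imK) • ol = _
  simp [ok, ol, Prod.ext_iff, Quaternion.ext_iff]

lemma phi2_i : phi2 ⟨oi, oi_mem_P⟩ = 0 := by
  show (oi.1.imJ) • (0, qmk 0 (-1) 0 0) + (oi.1.imK) • ol = 0
  simp [oi]

lemma phi_apply_u (φ : Pplane →ₗ[ℝ] SplitOct) {α β : ℝ}
    (hj : φ ⟨oj, oj_mem_P⟩ = (0, (⟨α, -β, 0, 0⟩ : ℍ[ℝ])))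
    (hk : φ ⟨ok, ok_mem_P⟩ = (0, (⟨β, α, 0, 0⟩ : ℍ[ℝ])))
    {u : SplitOct} (hu : u ∈ Pplane) (huN : u ∈ Nplane) :
    φ ⟨u, hu⟩ =
      (0, (⟨u.1.imJ * α + u.1.imK * β, -(u.1.imJ * β) + u.1.imK * α, 0, 0⟩ : ℍ[ℝ])) := by
  obtain ⟨h2, hr, hI⟩ := mem_N_iff.mp huN
  have hdec : (⟨u, hu⟩ : Pplane) = u.1.imJ • ⟨oj, oj_mem_P⟩ + u.1.imK • ⟨ok, ok_mem_P⟩ := by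
    refine Subtype.ext (Prod.ext ?_ ?_)
    · apply Quaternion.ext <;> simp [oj, ok, hr, hI]
    · simp [oj, ok, h2]
  rw [hdec, map_add, map_smul, map_smul, hj, hk]
  simp [Prod.ext_iff, Quaternion.ext_iff]
  try constructor <;> ring
  try ring

lemma phi_apply_v (φ : Pplane →ₗ[ℝ] SplitOct) {α β : ℝ}
    (hi : φ ⟨oi, oi_mem_P⟩ = 0)
    (hj : φ ⟨oj, oj_mem_P⟩ = (0, (⟨α, -β, 0, 0⟩ : ℍ[ℝ])))
    (hk : φ ⟨ok, ok_mem_P⟩ = (0, (⟨β, α, 0, 0⟩ : ℍ[ℝ])))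
    {v : SplitOct} (hv : v ∈ Pplane) :
    φ ⟨v, hv⟩ =
      (0, (⟨v.1.imJ * α + v.1.imK * β, -(v.1.imJ * β) + v.1.imK * α, 0, 0⟩ : ℍ[ℝ])) := by
  obtain ⟨h2, hr⟩ := mem_P_iff.mp hv
  have hdec : (⟨v, hv⟩ : Pplane) =
      v.1.imI • ⟨oi, oi_mem_P⟩ + (v.1.imJ • ⟨oj, oj_mem_P⟩ + v.1.imK • ⟨ok, ok_mem_P⟩) := by
    refine Subtype.ext (Prod.ext ?_ ?_)
    · apply Quaternion.ext <;> simp [oi, oj, ok, hr]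
    · simp [oi, oj, ok, h2]
  rw [hdec, map_add, map_add, map_smul, map_smul, map_smul, hi, hj, hk]
  simp [Prod.ext_iff, Quaternion.ext_iff]
  try constructor <;> ring
  try ring

/-- `x.imJ + x.imK i` as a quaternion. -/
def qJK (x : ℍ[ℝ]) : ℍ[ℝ] := ⟨x.imJ, x.imK, 0, 0⟩

/-- `x.imK - x.imJ i` as a quaternion. -/
def qKJ (x : ℍ[ℝ]) : ℍ[ℝ] := ⟨x.imK, -x.imJ, 0, 0⟩

/-- The first linear condition cutting out `R(u,v)` inside `P⊥`. -/
def Cc1 (u v : SplitOct) (w : ℍ[ℝ]) : ℝ :=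
  (qJK u.1 * star w).re + (qJK v.1 * star (w * (u.1 * v.1))).re

/-- The second linear condition cutting out `R(u,v)` inside `P⊥`. -/
def Cc2 (u v : SplitOct) (w : ℍ[ℝ]) : ℝ :=
  (qKJ u.1 * star w).re + (qKJ v.1 * star (w * (u.1 * v.1))).re

lemma cond_of_decomp (u v : SplitOct) (hu : u ∈ Pplane) (hv : v ∈ Pplane)
    (huN : u ∈ Nplane) (φ : Pplane →ₗ[ℝ] SplitOct) (α β : ℝ)
    (hi : φ ⟨oi, oi_mem_P⟩ = 0)
    (hj : φ ⟨oj, oj_mem_P⟩ = (0, (⟨α, -β, 0, 0⟩ : ℍ[ℝ])))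
    (hk : φ ⟨ok, ok_mem_P⟩ = (0, (⟨β, α, 0, 0⟩ : ℍ[ℝ])))
    (z : SplitOct) (hz : z.1 = 0) :
    polar (φ ⟨u, hu⟩) z + polar (φ ⟨v, hv⟩) (mul (mul u v) z)
      = -(α * Cc1 u v z.2 + β * Cc2 u v z.2) := by
  have hu2 : u.2 = 0 := (mem_P_iff.mp hu).1
  have hv2 : v.2 = 0 := (mem_P_iff.mp hv).1
  rw [phi_apply_u φ hj hk hu huN, phi_apply_v φ hi hj hk hv]
  simp only [Cc1, Cc2, qJK, qKJ, mk_eq_qmk, pair_fix2, polar_apply, mul, hu2, hv2, hz]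
  simp [Quaternion.re_mul, Quaternion.imI_mul, Quaternion.imJ_mul, Quaternion.imK_mul,
    Quaternion.re_star, Quaternion.imI_star, Quaternion.imJ_star, Quaternion.imK_star]
  ring

lemma mem_Rsub_iff {u v : SplitOct} (hu : u ∈ Pplane) (hv : v ∈ Pplane)
    (huN : u ∈ Nplane) {z : SplitOct} :
    z ∈ Rsub u v hu hv ↔ z.1 = 0 ∧ Cc1 u v z.2 = 0 ∧ Cc2 u v z.2 = 0 := by
  constructor
  · rintro ⟨hz1, hz2⟩
    have hz0 : z.1 = 0 := mem_orthP_iff.mp hz1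
    have h1 := hz2 phi1 phi1_mem
    have h2 := hz2 phi2 phi2_mem
    rw [cond_of_decomp u v hu hv huN phi1 1 0 phi1_i phi1_j phi1_k z hz0] at h1
    rw [cond_of_decomp u v hu hv huN phi2 0 1 phi2_i phi2_j phi2_k z hz0] at h2
    refine ⟨hz0, by linarith, by linarith⟩
  · rintro ⟨hz0, hC1, hC2⟩
    refine ⟨mem_orthP_iff.mpr hz0, fun φ hφ => ?_⟩
    obtain ⟨α, β, hj, hk⟩ := Pzero_decomp hφ
    rw [cond_of_decomp u v hu hv huN φ α β hφ.2.1 hj hk z hz0, hC1, hC2]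
    ring

/-- For orthonormal `u, v ∈ P` with `u ∈ N`, the orthogonal projection
`π_B` restricted to `R(u,v)` is a linear isomorphism onto `B`; in particular `R(u,v)` is
2-dimensional. -/
theorem projection_R_onto_B
    (u v : SplitOct) (hu : u ∈ Pplane) (hv : v ∈ Pplane)
    (hqu : q u = 1) (hqv : q v = 1) (huv : polar u v = 0) (huN : u ∈ Nplane) :
    (∀ b ∈ Bplane, ∃! z, z ∈ Rsub u v hu hv ∧ z - b ∈ orth Bplane) ∧
    Module.finrank ℝ (Rsub u v hu hv) = 2 := by
  obtain ⟨hu2, hur, huI⟩ := mem_N_iff.mp huN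
  obtain ⟨hv2, hvr⟩ := mem_P_iff.mp hv
  set a := u.1.imJ with ha
  set b := u.1.imK with hb
  set c := v.1.imI with hc
  set d := v.1.imJ with hd
  set e := v.1.imK with he
  have h1 : a^2 + b^2 = 1 := by
    rw [q_apply, hu2] at hqu
    simp [Quaternion.normSq_def', hur, huI] at hqu
    linear_combination hqu
  have h3 : a*d + b*e = 0 := by
    rw [polar_apply, hu2, hv2] at huv
    simp [Quaternion.re_mul, Quaternion.re_star, Quaternion.imI_star, Quaternion.imJ_star,
      Quaternion.imK_star, hur, huI, hvr] at huv
    linear_combination huv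
  set m := a*e - b*d with hm
  set A := a + e*m with hA
  set B := b - d*m with hB
  set g := c*(a*e + b*d) with hg
  set k := c*(a*d - b*e) with hk
  have hD : A^2 + B^2 = (1+m^2)^2 := by
    rw [hA, hB, hm]
    linear_combination (1 - (a*e-b*d)^2*(d^2+e^2)) * h1 + ((a*e-b*d)^2*(a*d+b*e)) * h3
  have hD0 : A^2 + B^2 ≠ 0 := by
    rw [hD]; positivity
  have hC1eq : ∀ w : ℍ[ℝ], Cc1 u v w = A * w.re + B * w.imI - g * w.imJ + k * w.imK := by
    intro w
    rw [Cc1, hA, hB, hg, hk, hm]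
    simp [qJK, Quaternion.re_mul, Quaternion.imI_mul, Quaternion.imJ_mul, Quaternion.imK_mul,
      Quaternion.re_star, Quaternion.imI_star, Quaternion.imJ_star, Quaternion.imK_star,
      hur, huI, hvr]
    linear_combination (-(d*w.re + e*w.imI)) * h3
  have hC2eq : ∀ w : ℍ[ℝ], Cc2 u v w = B * w.re - A * w.imI + k * w.imJ + g * w.imK := by
    intro w
    rw [Cc2, hA, hB, hg, hk, hm]
    simp [qKJ, Quaternion.re_mul, Quaternion.imI_mul, Quaternion.imJ_mul, Quaternion.imK_mul,
      Quaternion.re_star, Quaternion.imI_star, Quaternion.imJ_star, Quaternion.imK_star,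
      hur, huI, hvr]
    linear_combination (d*w.imI - e*w.re) * h3
  have huniq : ∀ x y x' y' : ℝ, A*x + B*y = A*x' + B*y' → B*x - A*y = B*x' - A*y' →
      x = x' ∧ y = y' := by
    intro x y x' y' e1 e2
    constructor
    · refine mul_left_cancel₀ hD0 ?_
      linear_combination A * e1 + B * e2
    · refine mul_left_cancel₀ hD0 ?_
      linear_combination B * e1 - A * e2
  have part1 : ∀ b' ∈ Bplane, ∃! z, z ∈ Rsub u v hu hv ∧ z - b' ∈ orth Bplane := by
    intro bb hbb
    obtain ⟨hbb1, hbbr, hbbI⟩ := mem_B_iff.mp hbb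
    set s := bb.2.imJ with hs
    set t := bb.2.imK with ht
    set x0 := (A*(g*s - k*t) + B*(-(k*s) - g*t))/(A^2+B^2) with hx0
    set y0 := (B*(g*s - k*t) - A*(-(k*s) - g*t))/(A^2+B^2) with hy0
    have hz0C1 : A * x0 + B * y0 - g * s + k * t = 0 := by
      rw [hx0, hy0]
      field_simp
      ring
    have hz0C2 : B * x0 - A * y0 + k * s + g * t = 0 := by
      rw [hx0, hy0]
      field_simp
      ring
    refine ⟨(0, (⟨x0, y0, s, t⟩ : ℍ[ℝ])), ⟨?_, ?_⟩, ?_⟩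
    · rw [mem_Rsub_iff hu hv huN]
      refine ⟨rfl, ?_, ?_⟩
      · rw [hC1eq]
        exact hz0C1
      · rw [hC2eq]
        exact hz0C2
    · rw [mem_orthB_iff]
      refine ⟨?_, ?_, ?_⟩ <;> simp [hbb1, hs, ht]
    · rintro z ⟨hzR, hzB⟩
      obtain ⟨hz0, hc1, hc2⟩ := (mem_Rsub_iff hu hv huN).mp hzR
      obtain ⟨-, hzJ, hzK⟩ := mem_orthB_iff.mp hzB
      have hsJ : z.2.imJ = s := by
        simpa [sub_eq_zero] using hzJ
      have hsK : z.2.imK = t := by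
        simpa [sub_eq_zero] using hzK
      rw [hC1eq] at hc1
      rw [hC2eq] at hc2
      rw [hsJ, hsK] at hc1 hc2
      have he1 : A * z.2.re + B * z.2.imI = A * x0 + B * y0 := by linarith
      have he2 : B * z.2.re - A * z.2.imI = B * x0 - A * y0 := by linarith
      obtain ⟨hex, hey⟩ := huniq _ _ _ _ he1 he2
      refine Prod.ext hz0 ?_
      apply Quaternion.ext <;> simp [hex, hey, hsJ, hsK]
  refine ⟨part1, ?_⟩
  let π : (Rsub u v hu hv) →ₗ[ℝ] ℝ × ℝ :=
    { toFun := fun z => ((z : SplitOct).2.imJ, (z : SplitOct).2.imK)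
      map_add' := fun x y => by simp
      map_smul' := fun r x => by simp }
  have hπ : ∀ z : (Rsub u v hu hv), π z = ((z : SplitOct).2.imJ, (z : SplitOct).2.imK) :=
    fun _ => rfl
  have hmkB : ∀ s t : ℝ, ((0, (⟨0,0,s,t⟩ : ℍ[ℝ])) : SplitOct) ∈ Bplane :=
    fun s t => mem_B_iff.mpr ⟨rfl, rfl, rfl⟩
  have hbij : Function.Bijective π := by
    constructor
    · rintro z z' hzz
      have hJ : (z : SplitOct).2.imJ = (z' : SplitOct).2.imJ := congrArg Prod.fst hzz
      have hK : (z : SplitOct).2.imK = (z' : SplitOct).2.imK := congrArg Prod.snd hzz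
      set bb : SplitOct := (0, (⟨0, 0, (z : SplitOct).2.imJ, (z : SplitOct).2.imK⟩ : ℍ[ℝ]))
        with hbbdef
      obtain ⟨w, -, hwu⟩ := part1 bb (hmkB _ _)
      have hz1 : (z : SplitOct).1 = 0 := ((mem_Rsub_iff hu hv huN).mp z.2).1
      have hz1' : (z' : SplitOct).1 = 0 := ((mem_Rsub_iff hu hv huN).mp z'.2).1
      have e1 : (z : SplitOct) = w := hwu _ ⟨z.2, mem_orthB_iff.mpr (by simp [hbbdef, hz1])⟩
      have e2 : (z' : SplitOct) = w :=
        hwu _ ⟨z'.2, mem_orthB_iff.mpr (by simp [hbbdef, hz1', hJ, hK])⟩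
      exact Subtype.ext (e1.trans e2.symm)
    · rintro ⟨s, t⟩
      obtain ⟨w, ⟨hwR, hwB⟩, -⟩ := part1 (0, (⟨0,0,s,t⟩ : ℍ[ℝ])) (hmkB s t)
      obtain ⟨-, hwJ, hwK⟩ := mem_orthB_iff.mp hwB
      refine ⟨⟨w, hwR⟩, ?_⟩
      rw [hπ]
      have hJ1 : w.2.imJ = s := by simpa [sub_eq_zero] using hwJ
      have hK1 : w.2.imK = t := by simpa [sub_eq_zero] using hwK
      simp [hJ1, hK1]
  have := LinearEquiv.finrank_eq (LinearEquiv.ofBijective π hbij)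
  rw [this, Module.finrank_prod, Module.finrank_self]
end SplitOct
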